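/- Let G be a real symmetric positive definite 2×2 matrix with det G = 1, J = ((0,-1),(1,0)), and suppose the 2×2 matrix Df with rows ∇f₁, ∇f₂ satisfies ∇f₂ = J G ∇f₁ with ∇f₁ ≠ 0. Then (det Df)⁻¹ · Df · G · Dfᵀ = I (the 2×2 identity matrix). -/

import Mathlib

open scoped Matrix

theorem stmt5 (G : Matrix (Fin 2) (Fin 2) ℝ) (hG : G.PosDef) (hdet : G.det = 1)
    (Df : Matrix (Fin 2) (Fin 2) ℝ)
    (hrow : Df 1 = (!![0, -1; 1, 0] : Matrix (Fin 2) (Fin 2) ℝ) *ᵥ (G *ᵥ (Df 0)))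
    (hne : Df 0 ≠ 0) :
    (Df.det)⁻¹ • (Df * G * Df.transpose) = (1 : Matrix (Fin 2) (Fin 2) ℝ) := by
  have hsym : G 0 1 = G 1 0 := by
    have h := congrFun (congrFun hG.1.eq 0) 1
    simpa [Matrix.conjTranspose_apply] using h.symm
  have hpos : 0 < Df 0 ⬝ᵥ (G *ᵥ Df 0) := by simpa using hG.dotProduct_mulVec_pos hne
  have hq : Df 0 ⬝ᵥ (G *ᵥ Df 0) =
      Df 0 0 * (G 0 0 * Df 0 0 + G 0 1 * Df 0 1) +
      Df 0 1 * (G 1 0 * Df 0 0 + G 1 1 * Df 0 1) := by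
    simp [dotProduct, Matrix.mulVec, Fin.sum_univ_two]
  have h10 : Df 1 0 = -(G 1 0 * Df 0 0 + G 1 1 * Df 0 1) := by
    have := congrFun hrow 0
    simp [Matrix.mulVec, dotProduct, Fin.sum_univ_two] at this
    linarith
  have h11 : Df 1 1 = G 0 0 * Df 0 0 + G 0 1 * Df 0 1 := by
    have := congrFun hrow 1
    simp [Matrix.mulVec, dotProduct, Fin.sum_univ_two] at this
    linarith
  have hDdet : Df.det = Df 0 ⬝ᵥ (G *ᵥ Df 0) := by
    rw [Matrix.det_fin_two, hq, h10, h11]; ring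
  have hDne : Df.det ≠ 0 := by rw [hDdet]; positivity
  have hGdet : G 0 0 * G 1 1 - G 0 1 * G 1 0 = 1 := by
    rw [← Matrix.det_fin_two]; exact hdet
  have key : Df * G * Df.transpose = Df.det • (1 : Matrix (Fin 2) (Fin 2) ℝ) := by
    ext i j
    fin_cases i <;> fin_cases j <;>
      simp [Matrix.mul_apply, Matrix.transpose_apply, Fin.sum_univ_two, h10, h11,
        Matrix.one_apply, Matrix.det_fin_two, Matrix.smul_apply]
    · ring
    · linear_combination (Df 0 0 * (G 0 0 * Df 0 0 + G 0 1 * Df 0 1) +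
        Df 0 1 * (G 1 0 * Df 0 0 + G 1 1 * Df 0 1)) * hsym
    · ring
    · linear_combination (Df 0 0 * (G 0 0 * Df 0 0 + G 0 1 * Df 0 1) +
        Df 0 1 * (G 1 0 * Df 0 0 + G 1 1 * Df 0 1)) * hGdet
  rw [key, smul_smul, inv_mul_cancel₀ hDne, one_smul]
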